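/- Let α ∈ (1,2), θ > 0, β ∈ (0,1], and let ψ : (0, r₀] → ℝ be given by ψ(r) = r(1 − log^{-θ}(1/r)). Then for any constants c₄, c₅ > 0 there exist c₆ > 0 and r₁ ∈ (0, r₀] such that for all 0 < r ≤ r₁: c₁ r^{-α} · r² · ψ''(2r) + c₄ r^{1-α} ψ'(r) r + c₅ ψ'(r) r^β ≤ −c₆ r^{1-α} log^{-(1+θ)}(1/r), provided β > 1 − α (which holds automatically since α > 1 and β > 0) and c₁ > 0. -/

import Mathlib

open Real Filter Set

lemma stmt15_aux (p : ℝ) {x : ℝ} (hx : 0 < x) (hx1 : x < 1) :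
    HasDerivAt (fun r : ℝ => Real.log (1/r) ^ p) (-p * Real.log (1/x) ^ (p-1) / x) x := by
  have hlx : 0 < Real.log (1/x) := Real.log_pos (by rw [lt_div_iff₀ hx]; linarith)
  have h1 : HasDerivAt (fun r : ℝ => Real.log (1/r)) (-x⁻¹) x := by
    have h := (Real.hasDerivAt_log (ne_of_gt hx)).neg
    have : (fun r : ℝ => Real.log (1/r)) = fun r => -Real.log r := by
      funext r; rw [one_div, Real.log_inv]
    rw [this]; exact h
  have h2 := Real.hasDerivAt_rpow_const (x := Real.log (1/x)) (p := p) (Or.inl hlx.ne')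
  have := h2.comp x h1
  refine this.congr_deriv ?_
  ring

lemma stmt15_derivG (θ : ℝ) {x : ℝ} (hx : 0 < x) (hx1 : x < 1) :
    HasDerivAt (fun r : ℝ => 1 - Real.log (1/r) ^ (-θ) - θ * Real.log (1/r) ^ (-θ-1))
      (-θ * Real.log (1/x) ^ (-θ-1) / x - θ*(θ+1) * Real.log (1/x) ^ (-θ-2) / x) x := by
  have h1 := ((hasDerivAt_const x (1:ℝ)).sub (stmt15_aux (-θ) hx hx1)).sub
    ((stmt15_aux (-θ-1) hx hx1).const_mul θ)
  refine h1.congr_deriv ?_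
  rw [show (-θ-1) - 1 = -θ-2 by ring, show (-θ) - 1 = -θ-1 by ring]
  ring

lemma stmt15_derivψ {θ : ℝ} {ψ : ℝ → ℝ}
    (hψ : ∀ r : ℝ, 0 < r → ψ r = r * (1 - Real.log (1 / r) ^ (-θ)))
    {x : ℝ} (hx : 0 < x) (hx1 : x < 1) :
    deriv ψ x = 1 - Real.log (1/x) ^ (-θ) - θ * Real.log (1/x) ^ (-θ-1) := by
  have heq : ψ =ᶠ[nhds x] fun r => r * (1 - Real.log (1/r) ^ (-θ)) :=
    Filter.eventuallyEq_of_mem (isOpen_Ioi.mem_nhds hx) (fun y hy => hψ y hy)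
  rw [heq.deriv_eq]
  have h : HasDerivAt (fun r : ℝ => r * (1 - Real.log (1/r) ^ (-θ)))
      (1 - Real.log (1/x) ^ (-θ) - θ * Real.log (1/x) ^ (-θ-1)) x := by
    have := (hasDerivAt_id x).mul ((hasDerivAt_const x (1:ℝ)).sub (stmt15_aux (-θ) hx hx1))
    refine this.congr_deriv ?_
    rw [show (-θ) - 1 = -θ-1 by ring]
    simp only [Pi.sub_apply, id]
    field_simp
    ring
  exact h.deriv

lemma stmt15_deriv2ψ {θ : ℝ} {ψ : ℝ → ℝ}
    (hψ : ∀ r : ℝ, 0 < r → ψ r = r * (1 - Real.log (1 / r) ^ (-θ)))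
    {x : ℝ} (hx : 0 < x) (hx1 : x < 1) :
    deriv (deriv ψ) x = -θ * Real.log (1/x) ^ (-θ-1) / x - θ*(θ+1) * Real.log (1/x) ^ (-θ-2) / x := by
  have heq : deriv ψ =ᶠ[nhds x]
      fun r => 1 - Real.log (1/r) ^ (-θ) - θ * Real.log (1/r) ^ (-θ-1) :=
    Filter.eventuallyEq_of_mem (isOpen_Ioo.mem_nhds ⟨hx, hx1⟩)
      (fun y hy => stmt15_derivψ hψ hy.1 hy.2)
  rw [heq.deriv_eq]
  exact (stmt15_derivG θ hx hx1).deriv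

lemma stmt15_small (δ s C c : ℝ) (hδ : 0 < δ) (hs : 0 < s) (hC : 0 < C) :
    ∀ᶠ r in nhdsWithin (0:ℝ) (Set.Ioi 0), c * r ^ δ ≤ C * Real.log (1/r) ^ (-s) := by
  have h1 : Tendsto (fun r : ℝ => Real.log (1/r)) (nhdsWithin 0 (Set.Ioi 0)) atTop := by
    have h := Real.tendsto_log_nhdsGT_zero
    have h' : Tendsto (fun r : ℝ => -Real.log r) (nhdsWithin 0 (Set.Ioi 0)) atTop :=
      tendsto_neg_atBot_atTop.comp h
    refine h'.congr fun r => ?_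
    rw [one_div, Real.log_inv]
  have h2 := tendsto_rpow_mul_exp_neg_mul_atTop_nhds_zero s δ hδ
  have h3 := (h2.comp h1).const_mul c
  have hIoo : ∀ᶠ r in nhdsWithin (0:ℝ) (Set.Ioi 0), r ∈ Set.Ioo (0:ℝ) 1 :=
    Ioo_mem_nhdsGT_of_mem ⟨le_refl 0, one_pos⟩
  have h4 : Tendsto (fun r : ℝ => c * (r ^ δ * Real.log (1/r) ^ s))
      (nhdsWithin 0 (Set.Ioi 0)) (nhds 0) := by
    rw [show c * (0:ℝ) = 0 from mul_zero c] at h3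
    refine h3.congr' ?_
    filter_upwards [hIoo] with r hr
    have hrp : 0 < r := hr.1
    rw [Function.comp]
    rw [Real.rpow_def_of_pos hrp]
    congr 1
    rw [one_div, Real.log_inv]
    ring_nf
  have h5 := h4.eventually_lt_const hC
  filter_upwards [h5, hIoo] with r hr5 hr
  have hl : 0 < Real.log (1/r) := Real.log_pos (by rw [lt_div_iff₀ hr.1]; linarith [hr.2])
  have hls : 0 < Real.log (1/r) ^ s := Real.rpow_pos_of_pos hl s
  rw [Real.rpow_neg hl.le, ← div_eq_mul_inv, le_div_iff₀ hls]
  nlinarith [hr5]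


set_option maxHeartbeats 1000000 in
/-- For `ψ(r) = r(1 − log^{-θ}(1/r))`, `α ∈ (1,2)`, `θ > 0`, `β ∈ (0,1]`
and any constants `c₁, c₄, c₅ > 0`, there exist `c₆ > 0` and `r₁ ∈ (0, r₀]` such that for
all `0 < r ≤ r₁`:
`c₁ r^{-α} r² ψ''(2r) + c₄ r^{1-α} ψ'(r) r + c₅ ψ'(r) r^β ≤ −c₆ r^{1-α} log^{-(1+θ)}(1/r)`. -/

theorem stmt15 (α θ β r₀ : ℝ) (hα : 1 < α) (hα2 : α < 2) (hθ : 0 < θ)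
    (hβ : 0 < β) (hβ1 : β ≤ 1) (hr₀ : 0 < r₀)
    (c₁ c₄ c₅ : ℝ) (hc₁ : 0 < c₁) (hc₄ : 0 < c₄) (hc₅ : 0 < c₅)
    (ψ : ℝ → ℝ) (hψ : ∀ r : ℝ, 0 < r → ψ r = r * (1 - Real.log (1 / r) ^ (-θ))) :
    ∃ c₆ > (0 : ℝ), ∃ r₁ : ℝ, 0 < r₁ ∧ r₁ ≤ r₀ ∧ ∀ r : ℝ, 0 < r → r ≤ r₁ →
      c₁ * r ^ (-α) * r ^ 2 * deriv (deriv ψ) (2 * r)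
        + c₄ * r ^ (1 - α) * deriv ψ r * r
        + c₅ * deriv ψ r * r ^ β
      ≤ -c₆ * r ^ (1 - α) * Real.log (1 / r) ^ (-(1 + θ)) := by
  have hCpos : 0 < c₁ * θ / 8 := by positivity
  have hE : ∀ᶠ r in nhdsWithin (0:ℝ) (Set.Ioi 0),
      (r ∈ Set.Ioo (0:ℝ) (1/(2*Real.exp 1))
        ∧ c₄ * r ^ (1:ℝ) ≤ c₁*θ/8 * Real.log (1/r) ^ (-(1+θ)))
        ∧ c₅ * r ^ (β+α-1) ≤ c₁*θ/8 * Real.log (1/r) ^ (-(1+θ)) := by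
    have h1 : ∀ᶠ r in nhdsWithin (0:ℝ) (Set.Ioi 0), r ∈ Set.Ioo (0:ℝ) (1/(2*Real.exp 1)) :=
      Ioo_mem_nhdsGT_of_mem ⟨le_refl 0, by positivity⟩
    have h2 := stmt15_small 1 (1+θ) (c₁*θ/8) c₄ one_pos (by linarith) hCpos
    have h3 := stmt15_small (β+α-1) (1+θ) (c₁*θ/8) c₅ (by linarith) (by linarith) hCpos
    exact (h1.and h2).and h3
  rw [Filter.eventually_iff, mem_nhdsGT_iff_exists_Ioc_subset] at hE
  obtain ⟨u, hu, hsub⟩ := hE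
  refine ⟨c₁ * θ / 4, by positivity, min u r₀, lt_min hu hr₀, min_le_right u r₀,
    fun r hr hrle => ?_⟩
  obtain ⟨⟨hmem, hb1⟩, hb2⟩ := hsub ⟨hr, hrle.trans (min_le_left u r₀)⟩
  have hru : r < 1/(2*Real.exp 1) := hmem.2
  have hexp1 : (1:ℝ) < Real.exp 1 := by
    have := Real.exp_one_gt_d9; linarith
  have h2r : 0 < 2*r := by linarith
  have h2r1 : 2*r < 1 := by
    rw [lt_div_iff₀ (by positivity : (0:ℝ) < 2*Real.exp 1)] at hru
    nlinarith
  have hrlt1 : r < 1 := by linarith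
  have hl : 0 < Real.log (1/r) := Real.log_pos (by rw [lt_div_iff₀ hr]; linarith)
  have hL1 : 1 ≤ Real.log (1/(2*r)) := by
    rw [Real.le_log_iff_exp_le (by positivity), le_div_iff₀ h2r]
    rw [lt_div_iff₀ (by positivity : (0:ℝ) < 2*Real.exp 1)] at hru
    linarith
  have hL : 0 < Real.log (1/(2*r)) := by linarith
  have hLl : Real.log (1/(2*r)) ≤ Real.log (1/r) := by
    apply Real.log_le_log (by positivity)
    rw [div_le_div_iff₀ (by positivity) hr]; nlinarith
  rw [stmt15_deriv2ψ hψ h2r h2r1, stmt15_derivψ hψ hr hrlt1]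
  set L := Real.log (1/(2*r)) with hLdef
  set l := Real.log (1/r) with hldef
  set Q1 := L ^ (-θ-1) with hQ1
  set Q2 := L ^ (-θ-2) with hQ2
  set P := l ^ (-(1+θ)) with hP
  set P0 := l ^ (-θ) with hP0
  set P1 := l ^ (-θ-1) with hP1
  clear_value L l Q1 Q2 P P0 P1
  have hBpos : 0 < r ^ ((1:ℝ)-α) := Real.rpow_pos_of_pos hr _
  have hC : r ^ ((1:ℝ)-α) * r ^ (β+α-1) = r ^ β := by
    rw [← Real.rpow_add hr, show (1:ℝ)-α+(β+α-1) = β by ring]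
  have hrβpos : 0 < r ^ β := Real.rpow_pos_of_pos hr _
  have key1 : P ≤ Q1 := by
    rw [hP, hQ1, show -(1+θ) = -θ-1 by ring]
    exact Real.rpow_le_rpow_of_nonpos hL hLl (by linarith)
  have hQ2nn : 0 ≤ Q2 := hQ2 ▸ Real.rpow_nonneg hL.le _
  have hP0nn : 0 ≤ P0 := hP0 ▸ Real.rpow_nonneg hl.le _
  have hP1nn : 0 ≤ P1 := hP1 ▸ Real.rpow_nonneg hl.le _
  have hPpos : 0 < P := hP ▸ Real.rpow_pos_of_pos hl _
  set B := r ^ ((1:ℝ)-α) with hB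
  clear_value B
  have heq1 : c₁ * r ^ (-α) * r ^ 2 * (-θ * Q1 / (2*r) - θ*(θ+1) * Q2 / (2*r))
      = -(c₁*θ/2) * (B * Q1) - (c₁*θ*(θ+1)/2) * (B * Q2) := by
    rw [hB, show (1:ℝ)-α = -α+1 by ring, Real.rpow_add hr, Real.rpow_one]; field_simp
  rw [heq1]
  rw [Real.rpow_one] at hb1
  have t2 : c₄ * B * (1 - P0 - θ*P1) * r ≤ c₁*θ/8 * (B * P) := by
    have h1 : c₄ * B * (1 - P0 - θ*P1) * r ≤ c₄ * B * r := by
      nlinarith [mul_nonneg (mul_pos (mul_pos hc₄ hBpos) hr).le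
        (add_nonneg hP0nn (mul_nonneg hθ.le hP1nn))]
    have h2 : c₄ * B * r ≤ c₁*θ/8 * (B * P) := by
      nlinarith [mul_le_mul_of_nonneg_left hb1 hBpos.le]
    linarith
  have t3 : c₅ * (1 - P0 - θ*P1) * r ^ β ≤ c₁*θ/8 * (B * P) := by
    have h1 : c₅ * (1 - P0 - θ*P1) * r ^ β ≤ c₅ * r ^ β := by
      nlinarith [mul_nonneg (mul_pos hc₅ hrβpos).le
        (add_nonneg hP0nn (mul_nonneg hθ.le hP1nn))]
    have h2 : c₅ * r ^ β ≤ c₁*θ/8 * (B * P) := by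
      rw [← hC]; nlinarith [mul_le_mul_of_nonneg_left hb2 hBpos.le]
    linarith
  have t1 : -(c₁*θ/2) * (B * Q1) ≤ -(c₁*θ/2) * (B * P) := by
    nlinarith [mul_le_mul_of_nonneg_left key1 hBpos.le]
  have t1b : -(c₁*θ*(θ+1)/2) * (B * Q2) ≤ 0 := by
    have h0 : (0:ℝ) ≤ c₁*θ*(θ+1)/2 * (B * Q2) :=
      mul_nonneg (by positivity) (mul_nonneg hBpos.le hQ2nn)
    linarith
  linarith
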